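/- arXiv:2103.11309 — 3 statements merged into one kernel-verified Lean document; each statement's English description precedes it below -/
import Mathlib

section
/- Let A be a real n×n matrix whose off-diagonal entries are nonnegative (a Metzler matrix). Then for every t ≥ 0, all entries of the matrix exponential exp(tA) are nonnegative. -/
open NormedSpace

lemma exp_entry_nonneg_of_nonneg {n : ℕ} (B : Matrix (Fin n) (Fin n) ℝ)
    (hB : ∀ i j, 0 ≤ B i j) (i j : Fin n) : 0 ≤ exp B i j := by
  letI : SeminormedRing (Matrix (Fin n) (Fin n) ℝ) := Matrix.linftyOpSemiNormedRing
  letI : NormedRing (Matrix (Fin n) (Fin n) ℝ) := Matrix.linftyOpNormedRing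
  letI : NormedAlgebra ℝ (Matrix (Fin n) (Fin n) ℝ) := Matrix.linftyOpNormedAlgebra
  have hpow : ∀ k : ℕ, ∀ i j, 0 ≤ (B ^ k) i j := by
    intro k
    induction k with
    | zero =>
      intro i j
      rw [pow_zero, Matrix.one_apply]
      split <;> norm_num
    | succ k ih =>
      intro i j
      rw [pow_succ, Matrix.mul_apply]
      exact Finset.sum_nonneg fun l _ => mul_nonneg (ih i l) (hB l j)
  have hsum : Summable fun k : ℕ => ((k.factorial : ℝ)⁻¹ • B ^ k) :=
    expSeries_summable' (𝕂 := ℝ) B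
  let e : Matrix (Fin n) (Fin n) ℝ →L[ℝ] ℝ :=
    LinearMap.toContinuousLinearMap
      ((LinearMap.proj j).comp (LinearMap.proj i : Matrix (Fin n) (Fin n) ℝ →ₗ[ℝ] (Fin n → ℝ)))
  have he : ∀ M : Matrix (Fin n) (Fin n) ℝ, e M = M i j := fun _ => rfl
  have key : exp B i j = ∑' k : ℕ, (k.factorial : ℝ)⁻¹ • ((B ^ k) i j) := by
    have h1 : exp B = ∑' k : ℕ, (k.factorial : ℝ)⁻¹ • B ^ k := by
      rw [exp_eq_tsum ℝ]
    rw [h1]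
    calc (∑' k : ℕ, (k.factorial : ℝ)⁻¹ • B ^ k) i j
        = e (∑' k : ℕ, (k.factorial : ℝ)⁻¹ • B ^ k) := rfl
      _ = ∑' k : ℕ, e ((k.factorial : ℝ)⁻¹ • B ^ k) := e.map_tsum hsum
      _ = ∑' k : ℕ, (k.factorial : ℝ)⁻¹ • ((B ^ k) i j) := by
          refine tsum_congr fun k => ?_
          rw [map_smul, he]
  rw [key]
  exact tsum_nonneg fun k => smul_nonneg (by positivity) (hpow k i j)

/-- If `A` is a Metzler matrix (nonnegative off-diagonal entries), then every entry of
`exp (t • A)` is nonnegative for all `t ≥ 0`. -/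
theorem metzler_exp_nonneg {n : ℕ} (A : Matrix (Fin n) (Fin n) ℝ)
    (hA : ∀ i j, i ≠ j → 0 ≤ A i j) :
    ∀ t : ℝ, 0 ≤ t → ∀ i j, 0 ≤ NormedSpace.exp (t • A) i j := by
  intro t ht i j
  set c : ℝ := ∑ k, |A k k| with hc
  have hc0 : 0 ≤ c := Finset.sum_nonneg fun _ _ => abs_nonneg _
  have hck : ∀ k, |A k k| ≤ c := fun k =>
    Finset.single_le_sum (f := fun k => |A k k|) (fun _ _ => abs_nonneg _) (Finset.mem_univ k)
  set B : Matrix (Fin n) (Fin n) ℝ := A + c • (1 : Matrix (Fin n) (Fin n) ℝ) with hB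
  have hBnn : ∀ i j, 0 ≤ B i j := by
    intro i j
    by_cases h : i = j
    · subst h
      simp only [hB, Matrix.add_apply, Matrix.smul_apply, Matrix.one_apply_eq, smul_eq_mul,
        mul_one]
      have := neg_abs_le (A i i)
      linarith [hck i]
    · simp only [hB, Matrix.add_apply, Matrix.smul_apply, Matrix.one_apply_ne h, smul_eq_mul,
        mul_zero, add_zero]
      exact hA i j h
  have key : t • A = t • B + (-(t * c)) • (1 : Matrix (Fin n) (Fin n) ℝ) := by
    rw [hB]
    module
  have hcomm : Commute (t • B) ((-(t * c)) • (1 : Matrix (Fin n) (Fin n) ℝ)) :=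
    (Commute.one_right (t • B)).smul_right _
  rw [key, Matrix.exp_add_of_commute _ _ hcomm]
  have hdiag : (-(t * c)) • (1 : Matrix (Fin n) (Fin n) ℝ) =
      Matrix.diagonal (fun _ => -(t * c)) := Matrix.smul_one_eq_diagonal _
  rw [hdiag, Matrix.exp_diagonal, Matrix.mul_apply]
  refine Finset.sum_nonneg fun l _ => ?_
  rw [Matrix.diagonal_apply]
  split
  · refine mul_nonneg ?_ ?_
    · exact exp_entry_nonneg_of_nonneg (t • B)
        (fun i j => mul_nonneg ht (hBnn i j)) i l
    · rw [Pi.exp_def]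
      rw [← Real.exp_eq_exp_ℝ]
      exact (Real.exp_pos _).le
  · simp
end

section
/- Let A, A' ∈ ℝ^{n×n}, x₀, x₀' ∈ ℝ^n, C, C' ∈ ℝ^{k×n}. If the transfer matrices agree as rational functions, i.e., C (sI − A)^{-1} x₀ = C' (sI − A')^{-1} x₀' for all s ∈ ℂ with sufficiently large real part (say Re(s) > max(‖A‖, ‖A'‖)), then the outputs agree: C exp(tA) x₀ = C' exp(tA') x₀' for all t ≥ 0. -/
set_option synthInstance.maxHeartbeats 1000000
set_option maxHeartbeats 1000000

section Aux

open FormalMultilinearSeries in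
private lemma coeffs_eq_zero_of_tsum_inv_eq_zero (c : ℕ → ℂ) (K r S : ℝ) (hr : 0 ≤ r)
    (hb : ∀ m, ‖c m‖ ≤ K * r ^ m)
    (hz : ∀ s : ℝ, S < s → ∑' m, c m * ((s : ℂ)⁻¹) ^ m = 0) :
    ∀ m, c m = 0 := by
  have hK : 0 ≤ K := by have := (norm_nonneg (c 0)).trans (by simpa using hb 0); exact this
  set p : FormalMultilinearSeries ℂ ℂ ℂ := ofScalars ℂ c with hp
  have hnorm : ∀ n, ‖p n‖ = ‖c n‖ := by
    intro n
    rw [hp, ofScalars_norm]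
  have hrad : 0 < p.radius := by
    have hle : ((Real.toNNReal ((r+1)⁻¹)) : ENNReal) ≤ p.radius := by
      apply p.le_radius_of_bound K
      intro n
      rw [hnorm]
      rw [Real.coe_toNNReal _ (by positivity)]
      calc ‖c n‖ * ((r+1)⁻¹ : ℝ) ^ n
            ≤ (K * r ^ n) * ((r+1)⁻¹) ^ n := by
            apply mul_le_mul_of_nonneg_right (hb n) (by positivity)
        _ = K * (r * (r+1)⁻¹) ^ n := by ring
        _ ≤ K * 1 ^ n := by
            apply mul_le_mul_of_nonneg_left _ hK
            apply pow_le_pow_left₀ (by positivity)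
            rw [mul_inv_le_iff₀ (by linarith), one_mul]
            linarith
        _ = K := by simp
    refine lt_of_lt_of_le ?_ hle
    rw [ENNReal.coe_pos, ← NNReal.coe_pos, Real.coe_toNNReal _ (by positivity)]
    positivity
  have hball := p.hasFPowerSeriesOnBall hrad
  have hsum : ∀ x : ℂ, p.sum x = ∑' m, c m * x ^ m := by
    intro x
    unfold FormalMultilinearSeries.sum
    exact tsum_congr fun n => by
      rw [hp, ofScalars_apply_eq, smul_eq_mul]
  have han : AnalyticAt ℂ p.sum 0 := hball.analyticAt
  set f : ℕ → ℝ := fun j => max S r + 1 + j with hf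
  set u : ℕ → ℂ := fun j => ((f j : ℝ) : ℂ)⁻¹ with hu
  have hfpos : ∀ j : ℕ, 0 < f j := by
    intro j
    have h1 : (0:ℝ) ≤ j := Nat.cast_nonneg j
    have h2 := le_max_right S r
    simp only [hf]
    linarith
  have huz : ∀ j, p.sum (u j) = 0 := by
    intro j
    rw [hsum]
    apply hz
    have : (0:ℝ) ≤ j := Nat.cast_nonneg j
    have := le_max_left S r
    simp only [hf]; linarith
  have hune : ∀ j, u j ≠ 0 := by
    intro j
    simp only [hu, ne_eq, inv_eq_zero, Complex.ofReal_eq_zero]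
    exact (hfpos j).ne'
  have hu0 : Filter.Tendsto u Filter.atTop (nhdsWithin 0 {z : ℂ | z ≠ 0}) := by
    rw [tendsto_nhdsWithin_iff]
    refine ⟨?_, Filter.Eventually.of_forall fun j => hune j⟩
    have hfa : Filter.Tendsto f Filter.atTop Filter.atTop := by
      apply Filter.tendsto_atTop_add_const_left
      exact tendsto_natCast_atTop_atTop
    have : Filter.Tendsto (fun j => (f j)⁻¹) Filter.atTop (nhds 0) :=
      Filter.Tendsto.comp tendsto_inv_atTop_zero hfa
    have h2 : Filter.Tendsto (fun j => (((f j)⁻¹ : ℝ) : ℂ)) Filter.atTop (nhds ((0:ℝ):ℂ)) :=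
      (Complex.continuous_ofReal.tendsto _).comp this
    simpa [hu, Complex.ofReal_inv] using h2
  have hfreq : ∃ᶠ z in nhdsWithin 0 {z : ℂ | z ≠ 0}, p.sum z = 0 :=
    hu0.frequently (Filter.Frequently.of_forall huz)
  have hev : ∀ᶠ z in nhds (0:ℂ), p.sum z = 0 := by
    rcases han.eventually_eq_zero_or_eventually_ne_zero with h | h
    · exact h
    · rcases (hfreq.and_eventually h).exists with ⟨z, h1, h2⟩
      exact absurd h1 h2
  have hzero : HasFPowerSeriesAt (0 : ℂ → ℂ) p 0 :=
    hball.hasFPowerSeriesAt.congr (by filter_upwards [hev] with z hzz using hzz)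
  have := hzero.eq_zero
  intro m
  have h1 : p m = 0 := by rw [this]; rfl
  rw [hp] at h1
  exact (ofScalars_eq_zero ℂ m).mp h1


private lemma mulEquiv_ring_inverse {R S : Type*} [MonoidWithZero R] [MonoidWithZero S]
    (e : R ≃* S) (he : e 0 = 0) (x : R) : e (Ring.inverse x) = Ring.inverse (e x) := by
  by_cases h : IsUnit x
  · lift x to Rˣ using h
    rw [Ring.inverse_unit]
    have : IsUnit (e x) := x.isUnit.map e
    lift (e (x : R)) to Sˣ using this with u hu
    rw [Ring.inverse_unit]
    have : (u * Units.map (e : R →* S) x⁻¹ : Sˣ) = 1 := by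
      ext
      push_cast
      rw [Units.coe_map, hu, MonoidHom.coe_coe, ← map_mul, Units.mul_inv, map_one]
    have hinv : (u⁻¹ : Sˣ) = Units.map (e : R →* S) x⁻¹ :=
      inv_eq_of_mul_eq_one_right this
    rw [hinv]
    rfl
  · have h2 : ¬ IsUnit (e x) := by
      intro hc
      exact h (by simpa using hc.map e.symm)
    rw [Ring.inverse_non_unit _ h, Ring.inverse_non_unit _ h2, he]


private lemma ringEquiv_ring_inverse {R S : Type*} [Semiring R] [Semiring S]
    (e : R ≃+* S) (x : R) : e (Ring.inverse x) = Ring.inverse (e x) :=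
  mulEquiv_ring_inverse e.toMulEquiv (map_zero e) x

private lemma resolvent_series {𝔸 : Type*} [NormedRing 𝔸] [NormedAlgebra ℂ 𝔸] [CompleteSpace 𝔸]
    (a : 𝔸) (s : ℂ) (hs : ‖a‖ < ‖s‖) :
    ∃ U : 𝔸ˣ, (U : 𝔸) = s • (1:𝔸) - a ∧
      Ring.inverse (s • (1:𝔸) - a) = s⁻¹ • ∑' m : ℕ, (s⁻¹ • a) ^ m := by
  have habs : 0 < ‖s‖ := (norm_nonneg a).trans_lt hs
  have hs0 : s ≠ 0 := by
    intro hc; rw [hc] at habs; simp at habs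
  set t : 𝔸 := s⁻¹ • a with htdef
  have ht : ‖t‖ < 1 := by
    rw [htdef, norm_smul, norm_inv]
    rw [inv_mul_lt_iff₀ habs, mul_one]
    exact hs
  have hfact : s • (1:𝔸) - a = (s • (1:𝔸)) * (1 - t) := by
    rw [mul_sub, mul_one, htdef, mul_smul_comm, smul_mul_assoc, one_mul, smul_smul,
      inv_mul_cancel₀ hs0, one_smul]
  set B : 𝔸 := s⁻¹ • ∑' m : ℕ, t ^ m with hB
  have h1 : (s • (1:𝔸) - a) * B = 1 := by
    rw [hfact, hB, smul_mul_assoc, one_mul, smul_mul_smul_comm, mul_inv_cancel₀ hs0,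
      mul_neg_geom_series t ht, one_smul]
  have h2 : B * (s • (1:𝔸) - a) = 1 := by
    rw [hfact, hB, smul_mul_assoc s (1:𝔸) (1-t), one_mul, smul_mul_smul_comm,
      inv_mul_cancel₀ hs0, geom_series_mul_neg t ht, one_smul]
  refine ⟨⟨s • (1:𝔸) - a, B, h1, h2⟩, rfl, ?_⟩
  rw [show s • (1:𝔸) - a = ((⟨s • (1:𝔸) - a, B, h1, h2⟩ : 𝔸ˣ) : 𝔸) from rfl,
    Ring.inverse_unit]
  rfl


private lemma transfer_series {n k : ℕ} (Amat : Matrix (Fin n) (Fin n) ℂ)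
    (Cmat : Matrix (Fin k) (Fin n) ℂ) (x : Fin n → ℂ) (s : ℂ)
    (hs : ‖Matrix.toEuclideanCLM (𝕜 := ℂ) Amat‖ < ‖s‖) :
    Summable (fun m : ℕ => (s⁻¹) ^ (m+1) • Cmat.mulVec ((Amat ^ m).mulVec x)) ∧
    Cmat.mulVec (((s • (1 : Matrix (Fin n) (Fin n) ℂ) - Amat)⁻¹).mulVec x)
      = ∑' m : ℕ, (s⁻¹) ^ (m+1) • Cmat.mulVec ((Amat ^ m).mulVec x) := by
  classical
  set Φ := Matrix.toEuclideanCLM (𝕜 := ℂ) (n := Fin n) with hΦ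
  set a := Φ Amat with ha
  have habs : 0 < ‖s‖ := (norm_nonneg _).trans_lt hs
  have hs0 : s ≠ 0 := by intro hc; rw [hc] at habs; simp at habs
  have ht : ‖s⁻¹ • a‖ < 1 := by
    have h1 : ‖s⁻¹ • a‖ = ‖s⁻¹‖ * ‖a‖ :=
      norm_smul (α := ℂ) (β := EuclideanSpace ℂ (Fin n) →L[ℂ] EuclideanSpace ℂ (Fin n)) s⁻¹ a
    rw [h1, norm_inv, inv_mul_lt_iff₀ habs, mul_one]
    exact hs
  have hgeom : Summable (fun m : ℕ => (s⁻¹ • a) ^ m) :=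
    summable_geometric_of_norm_lt_one ht
  obtain ⟨U, hU, hRinv⟩ := resolvent_series a s hs
  -- image of matrix inverse under Φ
  have hΦinv : Φ ((s • (1 : Matrix (Fin n) (Fin n) ℂ) - Amat)⁻¹)
      = s⁻¹ • ∑' m : ℕ, (s⁻¹ • a) ^ m := by
    rw [Matrix.nonsing_inv_eq_ringInverse]
    have := ringEquiv_ring_inverse (Φ.toRingEquiv)
      (s • (1 : Matrix (Fin n) (Fin n) ℂ) - Amat)
    rw [show (Φ.toRingEquiv : Matrix (Fin n) (Fin n) ℂ → _) = Φ from rfl] at this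
    rw [this, map_sub, map_smul, map_one, ← ha, hRinv]
  set v : EuclideanSpace ℂ (Fin n) := (WithLp.equiv 2 (Fin n → ℂ)).symm x with hv
  have hmulvec : ∀ M : Matrix (Fin n) (Fin n) ℂ,
      M.mulVec x = WithLp.equiv 2 (Fin n → ℂ) (Φ M v) := by
    intro M
    rw [hv]
    rfl
  -- evaluation CLM
  set ev : (EuclideanSpace ℂ (Fin n) →L[ℂ] EuclideanSpace ℂ (Fin n)) →L[ℂ]
      EuclideanSpace ℂ (Fin n) := ContinuousLinearMap.apply ℂ _ v with hev
  have happly : (∑' m : ℕ, (s⁻¹ • a) ^ m) v = ∑' m : ℕ, ((s⁻¹ • a) ^ m) v := by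
    exact (ev.map_tsum hgeom)
  have hsum_ev : Summable (fun m : ℕ => ((s⁻¹ • a) ^ m) v) := by
    have := hgeom.map (ev.toLinearMap.toAddMonoidHom) ev.continuous
    exact this
  -- output map
  set G : EuclideanSpace ℂ (Fin n) →L[ℂ] (Fin k → ℂ) :=
    LinearMap.toContinuousLinearMap
      (Cmat.mulVecLin.comp (WithLp.linearEquiv 2 ℂ (Fin n → ℂ)).toLinearMap) with hG
  have hGapp : ∀ w : EuclideanSpace ℂ (Fin n),
      G w = Cmat.mulVec (WithLp.equiv 2 (Fin n → ℂ) w) := fun w => rfl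
  have hterm : ∀ m : ℕ, G (s⁻¹ • ((s⁻¹ • a) ^ m) v)
      = (s⁻¹) ^ (m+1) • Cmat.mulVec ((Amat ^ m).mulVec x) := by
    intro m
    have h1 : (s⁻¹ • a) ^ m = (s⁻¹) ^ m • Φ (Amat ^ m) := by
      rw [smul_pow, ha, ← map_pow]
    rw [h1, ContinuousLinearMap.smul_apply, map_smul, map_smul, hGapp,
      ← hmulvec (Amat ^ m), smul_smul, ← pow_succ']
  have hsummable : Summable (fun m : ℕ => (s⁻¹) ^ (m+1) • Cmat.mulVec ((Amat ^ m).mulVec x)) := by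
    have h1 : Summable (fun m : ℕ => s⁻¹ • ((s⁻¹ • a) ^ m) v) := hsum_ev.const_smul _
    have h2 := h1.map (G.toLinearMap.toAddMonoidHom) G.continuous
    refine h2.congr fun m => ?_
    exact hterm m
  refine ⟨hsummable, ?_⟩
  calc Cmat.mulVec (((s • (1 : Matrix (Fin n) (Fin n) ℂ) - Amat)⁻¹).mulVec x)
      = G (Φ ((s • (1 : Matrix (Fin n) (Fin n) ℂ) - Amat)⁻¹) v) := by
        rw [hGapp, ← hmulvec]
    _ = G (s⁻¹ • ∑' m : ℕ, ((s⁻¹ • a) ^ m) v) := by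
        rw [hΦinv]
        congr 1
        rw [ContinuousLinearMap.smul_apply, happly]
    _ = ∑' m : ℕ, G (s⁻¹ • ((s⁻¹ • a) ^ m) v) := by
        have hsumG : Summable (fun m : ℕ => G (((s⁻¹ • a) ^ m) v)) :=
          hsum_ev.map (G.toLinearMap.toAddMonoidHom) G.continuous
        rw [map_smul, G.map_tsum hsum_ev, ← Summable.tsum_const_smul s⁻¹ hsumG]
        exact tsum_congr fun m => by rw [map_smul]
    _ = ∑' m : ℕ, (s⁻¹) ^ (m+1) • Cmat.mulVec ((Amat ^ m).mulVec x) :=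
        tsum_congr hterm


private lemma markov_bound {n k : ℕ} (Amat : Matrix (Fin n) (Fin n) ℂ)
    (Cmat : Matrix (Fin k) (Fin n) ℂ) (x : Fin n → ℂ) :
    ∃ K : ℝ, 0 ≤ K ∧ ∀ (m : ℕ) (j : Fin k),
      ‖Cmat.mulVec ((Amat ^ m).mulVec x) j‖
        ≤ K * ‖Matrix.toEuclideanCLM (𝕜 := ℂ) Amat‖ ^ m := by
  classical
  set Φ := Matrix.toEuclideanCLM (𝕜 := ℂ) (n := Fin n) with hΦ
  set a := Φ Amat with ha
  set v : EuclideanSpace ℂ (Fin n) := (WithLp.equiv 2 (Fin n → ℂ)).symm x with hv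
  set G : EuclideanSpace ℂ (Fin n) →L[ℂ] (Fin k → ℂ) :=
    LinearMap.toContinuousLinearMap
      (Cmat.mulVecLin.comp (WithLp.linearEquiv 2 ℂ (Fin n → ℂ)).toLinearMap) with hG
  have hGapp : ∀ w : EuclideanSpace ℂ (Fin n),
      G w = Cmat.mulVec (WithLp.equiv 2 (Fin n → ℂ) w) := fun w => rfl
  have hmulvec : ∀ M : Matrix (Fin n) (Fin n) ℂ,
      M.mulVec x = WithLp.equiv 2 (Fin n → ℂ) (Φ M v) := by
    intro M
    rw [hv]
    rfl
  have hpowb : ∀ m : ℕ, ‖(a ^ m) v‖ ≤ ‖a‖ ^ m * ‖v‖ := by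
    intro m
    induction m with
    | zero => simp
    | succ m ih =>
        have h1 : a ^ (m+1) = a * a ^ m := (pow_succ' a m)
        have h2 : (a * a ^ m) v = a ((a ^ m) v) := rfl
        rw [h1, h2]
        calc ‖a ((a ^ m) v)‖ ≤ ‖a‖ * ‖(a ^ m) v‖ := a.le_opNorm _
          _ ≤ ‖a‖ * (‖a‖ ^ m * ‖v‖) :=
              mul_le_mul_of_nonneg_left ih (norm_nonneg a)
          _ = ‖a‖ ^ (m+1) * ‖v‖ := by ring
  refine ⟨‖G‖ * ‖v‖, by positivity, fun m j => ?_⟩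
  have h1 : G ((a ^ m) v) = Cmat.mulVec ((Amat ^ m).mulVec x) := by
    rw [hGapp, show (a ^ m) = Φ (Amat ^ m) by rw [ha, ← map_pow], ← hmulvec (Amat ^ m)]
  rw [← h1]
  calc ‖G ((a ^ m) v) j‖ ≤ ‖G ((a ^ m) v)‖ := norm_le_pi_norm _ j
    _ ≤ ‖G‖ * ‖(a ^ m) v‖ := G.le_opNorm _
    _ ≤ ‖G‖ * (‖a‖ ^ m * ‖v‖) := mul_le_mul_of_nonneg_left (hpowb m) (norm_nonneg G)
    _ = ‖G‖ * ‖v‖ * ‖a‖ ^ m := by ring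

private lemma map_mulVec_ofReal {p q : ℕ} (M : Matrix (Fin p) (Fin q) ℝ) (v : Fin q → ℝ) :
    (M.map (algebraMap ℝ ℂ)).mulVec (fun i => (v i : ℂ))
      = fun j => ((M.mulVec v) j : ℂ) := by
  funext j
  simp only [Matrix.mulVec, dotProduct, Matrix.map_apply, Complex.coe_algebraMap]
  push_cast
  rfl

end Aux

/-- If the transfer matrices `C (sI - A)⁻¹ x₀` of two uncontrolled LTI systems agree
for all `s` with `Re s > max ‖A‖ ‖A'‖` (operator norms, over `ℂ`), then the outputs
`C exp(tA) x₀` agree for all `t ≥ 0`. -/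
theorem lti_output_eq_of_transfer_eq {n k : ℕ}
    (A A' : Matrix (Fin n) (Fin n) ℝ) (x₀ x₀' : Fin n → ℝ)
    (C C' : Matrix (Fin k) (Fin n) ℝ)
    (h : ∀ s : ℂ,
      max ‖Matrix.toEuclideanCLM (𝕜 := ℂ) (A.map (algebraMap ℝ ℂ))‖
          ‖Matrix.toEuclideanCLM (𝕜 := ℂ) (A'.map (algebraMap ℝ ℂ))‖ < s.re →
      (C.map (algebraMap ℝ ℂ)).mulVec
          (((s • (1 : Matrix (Fin n) (Fin n) ℂ) - A.map (algebraMap ℝ ℂ))⁻¹).mulVec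
            (fun i => (x₀ i : ℂ))) =
        (C'.map (algebraMap ℝ ℂ)).mulVec
          (((s • (1 : Matrix (Fin n) (Fin n) ℂ) - A'.map (algebraMap ℝ ℂ))⁻¹).mulVec
            (fun i => (x₀' i : ℂ)))) :
    ∀ t : ℝ, 0 ≤ t →
      C.mulVec ((NormedSpace.exp (t • A)).mulVec x₀) =
        C'.mulVec ((NormedSpace.exp (t • A')).mulVec x₀') := by
  classical
  set Aℂ := A.map (algebraMap ℝ ℂ) with hAℂ
  set A'ℂ := A'.map (algebraMap ℝ ℂ) with hA'ℂ
  set Cℂ := C.map (algebraMap ℝ ℂ) with hCℂ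
  set C'ℂ := C'.map (algebraMap ℝ ℂ) with hC'ℂ
  set xℂ : Fin n → ℂ := fun i => (x₀ i : ℂ) with hxℂ
  set x'ℂ : Fin n → ℂ := fun i => (x₀' i : ℂ) with hx'ℂ
  set R : ℝ := max ‖Matrix.toEuclideanCLM (𝕜 := ℂ) Aℂ‖ ‖Matrix.toEuclideanCLM (𝕜 := ℂ) A'ℂ‖
    with hR
  have hR0 : 0 ≤ R := le_trans (norm_nonneg _) (le_max_left _ _)
  -- Markov parameters agree
  have hmark : ∀ m : ℕ, C.mulVec ((A ^ m).mulVec x₀) = C'.mulVec ((A' ^ m).mulVec x₀') := by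
    obtain ⟨K₁, hK₁0, hK₁⟩ := markov_bound Aℂ Cℂ xℂ
    obtain ⟨K₂, hK₂0, hK₂⟩ := markov_bound A'ℂ C'ℂ x'ℂ
    have key : ∀ (j : Fin k) (m : ℕ),
        Cℂ.mulVec ((Aℂ ^ m).mulVec xℂ) j - C'ℂ.mulVec ((A'ℂ ^ m).mulVec x'ℂ) j = 0 := by
      intro j
      set c : ℕ → ℂ := fun m =>
        Cℂ.mulVec ((Aℂ ^ m).mulVec xℂ) j - C'ℂ.mulVec ((A'ℂ ^ m).mulVec x'ℂ) j with hc
      have hb : ∀ m, ‖c m‖ ≤ (K₁ + K₂) * R ^ m := by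
        intro m
        have h1 := hK₁ m j
        have h2 := hK₂ m j
        have e1 : ‖Matrix.toEuclideanCLM (𝕜 := ℂ) Aℂ‖ ^ m ≤ R ^ m :=
          pow_le_pow_left₀ (norm_nonneg _) (le_max_left _ _) m
        have e2 : ‖Matrix.toEuclideanCLM (𝕜 := ℂ) A'ℂ‖ ^ m ≤ R ^ m :=
          pow_le_pow_left₀ (norm_nonneg _) (le_max_right _ _) m
        calc ‖c m‖ ≤ ‖Cℂ.mulVec ((Aℂ ^ m).mulVec xℂ) j‖
              + ‖C'ℂ.mulVec ((A'ℂ ^ m).mulVec x'ℂ) j‖ := norm_sub_le _ _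
          _ ≤ K₁ * R ^ m + K₂ * R ^ m := by
              refine add_le_add (h1.trans ?_) (h2.trans ?_)
              · exact mul_le_mul_of_nonneg_left e1 hK₁0
              · exact mul_le_mul_of_nonneg_left e2 hK₂0
          _ = (K₁ + K₂) * R ^ m := by ring
      have hz : ∀ s : ℝ, R < s → ∑' m, c m * ((s : ℂ)⁻¹) ^ m = 0 := by
        intro s hRs
        have hspos : 0 < s := lt_of_le_of_lt hR0 hRs
        have habs : ‖(s : ℂ)‖ = s := by
          rw [Complex.norm_real, Real.norm_eq_abs, abs_of_pos hspos]
        have hs1 : ‖Matrix.toEuclideanCLM (𝕜 := ℂ) Aℂ‖ < ‖(s : ℂ)‖ := by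
          rw [habs]; exact lt_of_le_of_lt (le_max_left _ _) hRs
        have hs2 : ‖Matrix.toEuclideanCLM (𝕜 := ℂ) A'ℂ‖ < ‖(s : ℂ)‖ := by
          rw [habs]; exact lt_of_le_of_lt (le_max_right _ _) hRs
        obtain ⟨hsum1, heq1⟩ := transfer_series Aℂ Cℂ xℂ (s : ℂ) hs1
        obtain ⟨hsum2, heq2⟩ := transfer_series A'ℂ C'ℂ x'ℂ (s : ℂ) hs2
        have hre : R < ((s : ℂ)).re := by simpa using hRs
        have htr := h (s : ℂ) hre
        rw [heq1, heq2] at htr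
        -- vector-valued tsum difference is zero
        have hdiff : ∑' m : ℕ, (((s:ℂ)⁻¹) ^ (m+1) • Cℂ.mulVec ((Aℂ ^ m).mulVec xℂ)
            - ((s:ℂ)⁻¹) ^ (m+1) • C'ℂ.mulVec ((A'ℂ ^ m).mulVec x'ℂ)) = 0 := by
          rw [Summable.tsum_sub hsum1 hsum2, htr, sub_self]
        have hsumd := hsum1.sub hsum2
        have happ : (0 : Fin k → ℂ) j = ∑' m : ℕ,
            ((((s:ℂ)⁻¹) ^ (m+1) • Cℂ.mulVec ((Aℂ ^ m).mulVec xℂ)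
            - ((s:ℂ)⁻¹) ^ (m+1) • C'ℂ.mulVec ((A'ℂ ^ m).mulVec x'ℂ)) j) := by
          rw [← hdiff, tsum_apply hsumd]
        have hser : ∑' m : ℕ, ((s:ℂ)⁻¹) ^ (m+1) * c m = 0 := by
          rw [show (0:ℂ) = (0 : Fin k → ℂ) j from rfl, happ]
          refine tsum_congr fun m => ?_
          simp only [Pi.sub_apply, Pi.smul_apply, smul_eq_mul, hc]
          ring
        have hfac : ∑' m : ℕ, ((s:ℂ)⁻¹) ^ (m+1) * c m
            = (s : ℂ)⁻¹ * ∑' m : ℕ, c m * ((s:ℂ)⁻¹) ^ m := by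
          rw [← tsum_mul_left]
          exact tsum_congr fun m => by ring
        rw [hfac] at hser
        have hsne : ((s : ℂ))⁻¹ ≠ 0 := by
          simp only [ne_eq, inv_eq_zero, Complex.ofReal_eq_zero]
          exact hspos.ne'
        exact (mul_eq_zero.mp hser).resolve_left hsne
      exact coeffs_eq_zero_of_tsum_inv_eq_zero c (K₁ + K₂) R R hR0 hb hz
    -- descend to ℝ
    intro m
    funext j
    have hpow1 : Aℂ ^ m = (A ^ m).map (algebraMap ℝ ℂ) := by
      rw [hAℂ, ← RingHom.mapMatrix_apply, ← map_pow, RingHom.mapMatrix_apply]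
    have hpow2 : A'ℂ ^ m = (A' ^ m).map (algebraMap ℝ ℂ) := by
      rw [hA'ℂ, ← RingHom.mapMatrix_apply, ← map_pow, RingHom.mapMatrix_apply]
    have hkey := key j m
    rw [sub_eq_zero] at hkey
    have e1 : Cℂ.mulVec ((Aℂ ^ m).mulVec xℂ)
        = fun j' => ((C.mulVec ((A ^ m).mulVec x₀)) j' : ℂ) := by
      rw [hpow1, hxℂ, map_mulVec_ofReal, hCℂ, map_mulVec_ofReal]
    have e2 : C'ℂ.mulVec ((A'ℂ ^ m).mulVec x'ℂ)
        = fun j' => ((C'.mulVec ((A' ^ m).mulVec x₀')) j' : ℂ) := by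
      rw [hpow2, hx'ℂ, map_mulVec_ofReal, hC'ℂ, map_mulVec_ofReal]
    rw [e1, e2] at hkey
    exact_mod_cast (id hkey : ((C.mulVec ((A ^ m).mulVec x₀) j : ℝ) : ℂ)
      = ((C'.mulVec ((A' ^ m).mulVec x₀') j : ℝ) : ℂ))
  -- conclude via the exponential series
  intro t _
  have hsum : Summable (fun m : ℕ => ((m.factorial : ℝ))⁻¹ • (t • A) ^ m) := by
    letI : SeminormedRing (Matrix (Fin n) (Fin n) ℝ) := Matrix.linftyOpSemiNormedRing
    letI : NormedRing (Matrix (Fin n) (Fin n) ℝ) := Matrix.linftyOpNormedRing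
    letI : NormedAlgebra ℝ (Matrix (Fin n) (Fin n) ℝ) := Matrix.linftyOpNormedAlgebra
    exact NormedSpace.expSeries_summable' (𝕂 := ℝ) (t • A)
  have hsum' : Summable (fun m : ℕ => ((m.factorial : ℝ))⁻¹ • (t • A') ^ m) := by
    letI : SeminormedRing (Matrix (Fin n) (Fin n) ℝ) := Matrix.linftyOpSemiNormedRing
    letI : NormedRing (Matrix (Fin n) (Fin n) ℝ) := Matrix.linftyOpNormedRing
    letI : NormedAlgebra ℝ (Matrix (Fin n) (Fin n) ℝ) := Matrix.linftyOpNormedAlgebra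
    exact NormedSpace.expSeries_summable' (𝕂 := ℝ) (t • A')
  -- output linear maps
  set F : Matrix (Fin n) (Fin n) ℝ →ₗ[ℝ] (Fin k → ℝ) :=
    { toFun := fun M => C.mulVec (M.mulVec x₀)
      map_add' := by
        intro M N
        show C.mulVec ((M + N).mulVec x₀) = C.mulVec (M.mulVec x₀) + C.mulVec (N.mulVec x₀)
        rw [Matrix.add_mulVec, Matrix.mulVec_add]
      map_smul' := by
        intro c M
        show C.mulVec ((c • M).mulVec x₀) = c • C.mulVec (M.mulVec x₀)
        rw [Matrix.smul_mulVec, Matrix.mulVec_smul] } with hF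
  set F' : Matrix (Fin n) (Fin n) ℝ →ₗ[ℝ] (Fin k → ℝ) :=
    { toFun := fun M => C'.mulVec (M.mulVec x₀')
      map_add' := by
        intro M N
        show C'.mulVec ((M + N).mulVec x₀') = C'.mulVec (M.mulVec x₀') + C'.mulVec (N.mulVec x₀')
        rw [Matrix.add_mulVec, Matrix.mulVec_add]
      map_smul' := by
        intro c M
        show C'.mulVec ((c • M).mulVec x₀') = c • C'.mulVec (M.mulVec x₀')
        rw [Matrix.smul_mulVec, Matrix.mulVec_smul] } with hF'
  set Fc : Matrix (Fin n) (Fin n) ℝ →L[ℝ] (Fin k → ℝ) := LinearMap.toContinuousLinearMap F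
    with hFc
  set Fc' : Matrix (Fin n) (Fin n) ℝ →L[ℝ] (Fin k → ℝ) := LinearMap.toContinuousLinearMap F'
    with hFc'
  have hFcapp : ∀ M, Fc M = C.mulVec (M.mulVec x₀) := fun M => rfl
  have hFc'app : ∀ M, Fc' M = C'.mulVec (M.mulVec x₀') := fun M => rfl
  calc C.mulVec ((NormedSpace.exp (t • A)).mulVec x₀)
      = Fc (∑' m : ℕ, ((m.factorial : ℝ))⁻¹ • (t • A) ^ m) := by
        rw [hFcapp, NormedSpace.exp_eq_tsum ℝ]
    _ = ∑' m : ℕ, Fc (((m.factorial : ℝ))⁻¹ • (t • A) ^ m) := Fc.map_tsum hsum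
    _ = ∑' m : ℕ, (((m.factorial : ℝ))⁻¹ * t ^ m) • C.mulVec ((A ^ m).mulVec x₀) := by
        refine tsum_congr fun m => ?_
        rw [map_smul, smul_pow, map_smul, hFcapp, smul_smul]
    _ = ∑' m : ℕ, (((m.factorial : ℝ))⁻¹ * t ^ m) • C'.mulVec ((A' ^ m).mulVec x₀') := by
        exact tsum_congr fun m => by rw [hmark m]
    _ = ∑' m : ℕ, Fc' (((m.factorial : ℝ))⁻¹ • (t • A') ^ m) := by
        refine tsum_congr fun m => ?_
        rw [map_smul, smul_pow, map_smul, hFc'app, smul_smul]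
    _ = Fc' (∑' m : ℕ, ((m.factorial : ℝ))⁻¹ • (t • A') ^ m) := (Fc'.map_tsum hsum').symm
    _ = C'.mulVec ((NormedSpace.exp (t • A')).mulVec x₀') := by
        rw [hFc'app, NormedSpace.exp_eq_tsum ℝ]
end

section
/- Markov parameters of an n-dimensional realization are determined by the first 2n of them: if A, A' ∈ ℝ^{n×n}, x₀, x₀' ∈ ℝ^n, C, C' ∈ ℝ^{k×n} satisfy C A^m x₀ = C' (A')^m x₀' for all m ∈ {0, 1, …, 2n − 1}, then C A^m x₀ = C' (A')^m x₀' for all natural numbers m. -/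
open Matrix Polynomial

/-- If the first `2n` Markov parameters of two `n`-dimensional realizations agree, then
all Markov parameters agree (by Cayley–Hamilton). -/
theorem markov_determined_by_first_2n {n k : ℕ}
    (A A' : Matrix (Fin n) (Fin n) ℝ) (x₀ x₀' : Fin n → ℝ)
    (C C' : Matrix (Fin k) (Fin n) ℝ)
    (h : ∀ m : ℕ, m < 2 * n →
      C.mulVec ((A ^ m).mulVec x₀) = C'.mulVec ((A' ^ m).mulVec x₀')) :
    ∀ m : ℕ, C.mulVec ((A ^ m).mulVec x₀) = C'.mulVec ((A' ^ m).mulVec x₀') := by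
  rcases Nat.eq_zero_or_pos n with hn | hn
  · subst hn
    intro m
    funext i
    simp [Matrix.mulVec, dotProduct]
  -- big block system
  set B : Matrix (Fin n ⊕ Fin n) (Fin n ⊕ Fin n) ℝ := Matrix.fromBlocks A 0 0 A' with hB
  have hpow : ∀ m : ℕ, B ^ m = Matrix.fromBlocks (A ^ m) 0 0 (A' ^ m) := by
    intro m
    induction m with
    | zero => simp [Matrix.fromBlocks_one]
    | succ m ih =>
      rw [pow_succ, pow_succ, pow_succ, ih, hB, Matrix.fromBlocks_multiply]
      simp
  set y : Fin n ⊕ Fin n → ℝ := Sum.elim x₀ x₀' with hy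
  set D : Matrix (Fin k) (Fin n ⊕ Fin n) ℝ := Matrix.fromCols C (-C') with hD
  -- the linear functional on matrices
  have hg : ∀ M : Matrix (Fin n ⊕ Fin n) (Fin n ⊕ Fin n) ℝ,
      D.mulVec (M.mulVec y) = D.mulVecLin (M.mulVecLin y) := fun _ => rfl
  have key : ∀ M : Matrix (Fin n ⊕ Fin n) (Fin n ⊕ Fin n) ℝ,
      (∀ i : ℕ, i < 2 * n → D.mulVec ((B ^ i).mulVec y) = 0) → True := fun _ _ => trivial
  have hDBm : ∀ m : ℕ, D.mulVec ((B ^ m).mulVec y) =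
      C.mulVec ((A ^ m).mulVec x₀) - C'.mulVec ((A' ^ m).mulVec x₀') := by
    intro m
    rw [hpow, hy, Matrix.fromBlocks_mulVec, hD]
    simp only [Matrix.zero_mulVec, add_zero, zero_add]
    rw [Matrix.fromCols_mulVec_sumElim]
    simp [Matrix.neg_mulVec, sub_eq_add_neg]
  have hsmall : ∀ i : ℕ, i < 2 * n → D.mulVec ((B ^ i).mulVec y) = 0 := by
    intro i hi
    rw [hDBm, h i hi, sub_self]
  have main : ∀ m : ℕ, D.mulVec ((B ^ m).mulVec y) = 0 := by
    intro m
    set p : ℝ[X] := B.charpoly with hp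
    have hmonic : p.Monic := B.charpoly_monic
    have hdeg : p.natDegree = 2 * n := by
      rw [hp, B.charpoly_natDegree_eq_dim]
      simp [two_mul]
    have hBm : B ^ m = Polynomial.aeval B ((X : ℝ[X]) ^ m %ₘ p) := by
      have h1 := congrArg (Polynomial.aeval B)
        (Polynomial.modByMonic_add_div ((X : ℝ[X]) ^ m) p)
      simpa [hp, map_add, _root_.map_mul, B.aeval_self_charpoly] using h1.symm
    have hrdeg : ((X : ℝ[X]) ^ m %ₘ p).natDegree < 2 * n := by
      rcases eq_or_ne ((X : ℝ[X]) ^ m %ₘ p) 0 with h0 | h0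
      · rw [h0]; simp; omega
      · have := Polynomial.degree_modByMonic_lt ((X : ℝ[X]) ^ m) hmonic
        have := Polynomial.natDegree_lt_natDegree h0 this
        omega
    rw [hBm, Polynomial.aeval_eq_sum_range' hrdeg]
    set r := (X : ℝ[X]) ^ m %ₘ p
    let L : Matrix (Fin n ⊕ Fin n) (Fin n ⊕ Fin n) ℝ →ₗ[ℝ] (Fin k → ℝ) :=
      { toFun := fun M => D.mulVec (M.mulVec y)
        map_add' := by
          intro M N
          simp [Matrix.add_mulVec, Matrix.mulVec_add]
        map_smul' := by
          intro c M
          simp [Matrix.smul_mulVec, Matrix.mulVec_smul, Matrix.mulVec_mulVec] }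
    have hL : ∀ M, L M = D.mulVec (M.mulVec y) := fun _ => rfl
    rw [← hL, map_sum]
    refine Finset.sum_eq_zero fun i hi => ?_
    rw [_root_.map_smul, hL, hsmall i (Finset.mem_range.mp hi), smul_zero]
  intro m
  have := main m
  rw [hDBm] at this
  exact sub_eq_zero.mp this
end
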